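/- Let n ≥ 1, ω = e^{2πi/n}, and work in B = ℂ[x,y]/(x^n − 1, y^n − 1). For 0 ≤ k ≤ n−1 set f_k(x) = Σ_{l=0}^{n−1} ω^{−kl} x^l and f_k(y) = Σ_{l=0}^{n−1} ω^{−kl} y^l. Then (Σ_{a+b=n−1} x^a y^b) · f_k(x) = ω^{−k} · f_k(x) · f_k(y) in B, where the sum runs over nonnegative integers a, b with a + b = n − 1. -/
import Mathlib
open Finset MvPolynomial

lemma aux_pow_mod {M : Type*} [Monoid M] (n : ℕ) (u : M) (hu : u ^ n = 1) (a : ℕ) :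
    u ^ a = u ^ (a % n) := by
  conv_lhs => rw [← Nat.div_add_mod a n, pow_add, pow_mul, hu, one_pow, one_mul]

lemma aux_pow_zmod {M : Type*} [Monoid M] (n : ℕ) (u : M) (hu : u ^ n = 1)
    {m m' : ℕ} (h : (m : ZMod n) = (m' : ZMod n)) : u ^ m = u ^ m' := by
  have : m % n = m' % n := (ZMod.natCast_eq_natCast_iff _ _ _).1 h
  rw [aux_pow_mod n u hu m, aux_pow_mod n u hu m', this]

lemma aux_shift {R : Type*} [CommRing R] [Algebra ℂ R] (n : ℕ) (ζ ω : ℂ)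
    (hζω : ζ * ω = 1) (hζn : ζ ^ n = 1) (k : ℕ) (t : R) (ht : t ^ n = 1) :
    t * (∑ l ∈ range n, ζ ^ (k * l) • t ^ l)
      = ω ^ k • (∑ l ∈ range n, ζ ^ (k * l) • t ^ l) := by
  set F := ∑ l ∈ range n, ζ ^ (k * l) • t ^ l with hF
  have key : ζ ^ k • (t * F) = F := by
    rw [hF, Finset.mul_sum, Finset.smul_sum]
    have step : ∀ l, ζ ^ k • (ζ ^ (k * l) • t ^ l * t) = ζ ^ (k * (l + 1)) • t ^ (l + 1) := by
      intro l
      rw [smul_mul_assoc, smul_smul, ← pow_add, ← pow_succ]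
      ring_nf
    simp only [mul_comm t, step]
    calc ∑ l ∈ range n, ζ ^ (k * (l + 1)) • t ^ (l + 1)
        = (∑ l ∈ range (n + 1), ζ ^ (k * l) • t ^ l) - ζ ^ (k * 0) • t ^ 0 := by
          rw [Finset.sum_range_succ']; ring
      _ = F := by
          rw [Finset.sum_range_succ]
          have h1 : ζ ^ (k * n) • t ^ n = ζ ^ (k * 0) • t ^ 0 := by
            simp [pow_mul, hζn, ht, mul_comm k n]
          rw [h1, hF]; ring
  calc t * F = (ω ^ k * ζ ^ k) • (t * F) := by
        rw [← mul_pow, mul_comm ω ζ, hζω, one_pow, one_smul]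
    _ = ω ^ k • F := by rw [mul_smul, key]

lemma aux_pow_shift {R : Type*} [CommRing R] [Algebra ℂ R] (n : ℕ) (ζ ω : ℂ)
    (hζω : ζ * ω = 1) (hζn : ζ ^ n = 1) (k : ℕ) (t : R) (ht : t ^ n = 1) (a : ℕ) :
    t ^ a * (∑ l ∈ range n, ζ ^ (k * l) • t ^ l)
      = ω ^ (k * a) • (∑ l ∈ range n, ζ ^ (k * l) • t ^ l) := by
  induction a with
  | zero => simp
  | succ a ih =>
      rw [pow_succ, mul_comm (t ^ a) t, mul_assoc, ih, mul_smul_comm,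
        aux_shift n ζ ω hζω hζn k t ht, smul_smul, ← pow_add, Nat.mul_succ]


lemma aux_main {R : Type*} [CommRing R] [Algebra ℂ R] (n : ℕ) (hn : 1 ≤ n) (ζ ω : ℂ)
    (hζω : ζ * ω = 1) (hζn : ζ ^ n = 1) (hωζ : ω = ζ ^ (n - 1)) (k : ℕ) (x y : R)
    (hx : x ^ n = 1) (hy : y ^ n = 1) :
    (∑ ab ∈ antidiagonal (n - 1), x ^ ab.1 * y ^ ab.2) * (∑ l ∈ range n, ζ ^ (k * l) • x ^ l)
      = ζ ^ k • ((∑ l ∈ range n, ζ ^ (k * l) • x ^ l) * (∑ l ∈ range n, ζ ^ (k * l) • y ^ l)) := by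
  set Fx := ∑ l ∈ range n, ζ ^ (k * l) • x ^ l with hFx
  set Fy := ∑ l ∈ range n, ζ ^ (k * l) • y ^ l with hFy
  rw [Finset.sum_mul]
  calc ∑ ab ∈ antidiagonal (n - 1), x ^ ab.1 * y ^ ab.2 * Fx
      = ∑ ab ∈ antidiagonal (n - 1), ω ^ (k * ab.1) • (y ^ ab.2 * Fx) := by
        refine Finset.sum_congr rfl fun ab _ => ?_
        rw [mul_comm (x ^ ab.1) (y ^ ab.2), mul_assoc,
          aux_pow_shift n ζ ω hζω hζn k x hx ab.1, mul_smul_comm]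
    _ = ∑ a ∈ range n, ω ^ (k * a) • (y ^ (n - 1 - a) * Fx) := by
        rw [Finset.Nat.sum_antidiagonal_eq_sum_range_succ_mk]
        have hsucc : (n - 1).succ = n := by omega
        rw [hsucc]
    _ = ∑ a ∈ range n, ζ ^ (k + k * (n - 1 - a)) • (y ^ (n - 1 - a) * Fx) := by
        refine Finset.sum_congr rfl fun a ha => ?_
        have ha' : a ≤ n - 1 := by
          have := Finset.mem_range.1 ha; omega
        congr 1
        rw [hωζ, ← pow_mul]
        refine aux_pow_zmod n ζ hζn ?_
        push_cast [Nat.cast_sub ha', Nat.cast_sub hn, ZMod.natCast_self]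
        ring
    _ = ∑ b ∈ range n, ζ ^ (k + k * b) • (y ^ b * Fx) :=
        Finset.sum_range_reflect (fun b => ζ ^ (k + k * b) • (y ^ b * Fx)) n
    _ = ζ ^ k • (Fx * Fy) := by
        rw [hFy, mul_comm Fx, Finset.sum_mul, Finset.smul_sum]
        refine Finset.sum_congr rfl fun b _ => ?_
        rw [smul_mul_assoc, smul_smul, ← pow_add]

/-- In `B = ℂ[x,y]/(x^n − 1, y^n − 1)` with `ω = e^{2πi/n}`, for
`f_k(x) = Σ_l ω^{−kl} x^l` and `f_k(y) = Σ_l ω^{−kl} y^l` one has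
`(Σ_{a+b=n−1} x^a y^b)·f_k(x) = ω^{−k}·f_k(x)·f_k(y)`. -/
theorem gornik_splitting_saddle (n : ℕ) (hn : 1 ≤ n) (ω : ℂ)
    (hω : ω = Complex.exp (2 * Real.pi * Complex.I / n))
    (k : ℕ) (hk : k ≤ n - 1)
    (fkx fky : MvPolynomial (Fin 2) ℂ ⧸
      Ideal.span {(X 0 : MvPolynomial (Fin 2) ℂ) ^ n - 1, (X 1 : MvPolynomial (Fin 2) ℂ) ^ n - 1})
    (hfkx : fkx = Ideal.Quotient.mk
      (Ideal.span {(X 0 : MvPolynomial (Fin 2) ℂ) ^ n - 1, (X 1 : MvPolynomial (Fin 2) ℂ) ^ n - 1})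
      (∑ l ∈ range n, C (ω ^ (-((k : ℤ) * (l : ℤ)))) * X 0 ^ l))
    (hfky : fky = Ideal.Quotient.mk
      (Ideal.span {(X 0 : MvPolynomial (Fin 2) ℂ) ^ n - 1, (X 1 : MvPolynomial (Fin 2) ℂ) ^ n - 1})
      (∑ l ∈ range n, C (ω ^ (-((k : ℤ) * (l : ℤ)))) * X 1 ^ l)) :
    Ideal.Quotient.mk
        (Ideal.span {(X 0 : MvPolynomial (Fin 2) ℂ) ^ n - 1, (X 1 : MvPolynomial (Fin 2) ℂ) ^ n - 1})
        (∑ ab ∈ antidiagonal (n - 1), X 0 ^ ab.1 * X 1 ^ ab.2) * fkx =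
      ω ^ (-(k : ℤ)) • (fkx * fky) := by
  subst hfkx hfky
  set I : Ideal (MvPolynomial (Fin 2) ℂ) :=
    Ideal.span {(X 0 : MvPolynomial (Fin 2) ℂ) ^ n - 1,
      (X 1 : MvPolynomial (Fin 2) ℂ) ^ n - 1} with hI
  have hn0 : (n : ℂ) ≠ 0 := Nat.cast_ne_zero.2 (by omega)
  have hωn : ω ^ n = 1 := by
    rw [hω, ← Complex.exp_nat_mul]
    have : (n : ℂ) * (2 * (Real.pi : ℂ) * Complex.I / n) = 2 * Real.pi * Complex.I := by
      field_simp
    rw [this, Complex.exp_two_pi_mul_I]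
  have hω0 : ω ≠ 0 := by rw [hω]; exact Complex.exp_ne_zero _
  set ζ := ω⁻¹ with hζ
  have hζω : ζ * ω = 1 := inv_mul_cancel₀ hω0
  have hζ0 : ζ ≠ 0 := inv_ne_zero hω0
  have hζn : ζ ^ n = 1 := by rw [hζ, inv_pow, hωn, inv_one]
  have hcast : ∀ l : ℕ, ω ^ (-((k : ℤ) * (l : ℤ))) = ζ ^ (k * l) := by
    intro l
    rw [hζ, inv_pow, ← zpow_natCast ω (k * l), ← zpow_neg]
    norm_cast
  have hck : ω ^ (-(k : ℤ)) = ζ ^ k := by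
    rw [hζ, inv_pow, ← zpow_natCast ω k, ← zpow_neg]
  have hωζ : ω = ζ ^ (n - 1) := by
    have h2 : ζ ^ (n - 1) * ζ = ω * ζ := by
      rw [← pow_succ, Nat.sub_add_cancel hn, hζn, mul_comm ω ζ, hζω]
    exact (mul_right_cancel₀ hζ0 h2).symm
  set mk := Ideal.Quotient.mk I with hmk
  set x : MvPolynomial (Fin 2) ℂ ⧸ I := mk (X 0) with hxdef
  set y : MvPolynomial (Fin 2) ℂ ⧸ I := mk (X 1) with hydef
  have hx : x ^ n = 1 := by
    have hmem : (X 0 : MvPolynomial (Fin 2) ℂ) ^ n - 1 ∈ I := by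
      apply Ideal.subset_span; left; rfl
    have h0 := Ideal.Quotient.eq_zero_iff_mem.2 hmem
    rw [map_sub, map_pow, map_one, sub_eq_zero] at h0
    exact h0
  have hy : y ^ n = 1 := by
    have hmem : (X 1 : MvPolynomial (Fin 2) ℂ) ^ n - 1 ∈ I := by
      apply Ideal.subset_span; right; rfl
    have h0 := Ideal.Quotient.eq_zero_iff_mem.2 hmem
    rw [map_sub, map_pow, map_one, sub_eq_zero] at h0
    exact h0
  have hsmul : ∀ (c : ℂ) (p : MvPolynomial (Fin 2) ℂ), mk (C c * p) = c • mk p := by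
    intro c p
    rw [← MvPolynomial.smul_eq_C_mul]
    exact map_smul (Ideal.Quotient.mkₐ ℂ I) c p
  have hfx : mk (∑ l ∈ range n, C (ω ^ (-((k : ℤ) * (l : ℤ)))) * X 0 ^ l)
      = ∑ l ∈ range n, ζ ^ (k * l) • x ^ l := by
    rw [map_sum]
    exact Finset.sum_congr rfl fun l _ => by rw [hsmul, map_pow, hcast]
  have hfy : mk (∑ l ∈ range n, C (ω ^ (-((k : ℤ) * (l : ℤ)))) * X 1 ^ l)
      = ∑ l ∈ range n, ζ ^ (k * l) • y ^ l := by
    rw [map_sum]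
    exact Finset.sum_congr rfl fun l _ => by rw [hsmul, map_pow, hcast]
  rw [hfx, hfy, hck, map_sum]
  simp only [map_mul, map_pow]
  exact aux_main n hn ζ ω hζω hζn hωζ k x y hx hy
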